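/- arXiv:q-alg/9612005 — 2 statements merged into one kernel-verified Lean document; each statement's English description precedes it below -/
import Mathlib

section
/- Let V be a finite type, let G be a connected simple graph on V, and let σ be a sign assignment giving each edge of G a value +1 or −1. Assume that every cycle of G is monochromatic, i.e., for every walk in G that is a cycle, all edges traversed by the cycle have the same sign. Then for any two spanning trees T₁ and T₂ of G, the sum of the signs of the edges of G that do not belong to T₁ equals the sum of the signs of the edges of G that do not belong to T₂. (This is the graph-theoretic core of Proposition 1: the nullification writhe of a reduced alternating link projection is independent of the choice of the nullification set, expressed on the Seifert graph, where nullification sets correspond exactly to complements of spanning trees.) -/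
open SimpleGraph Finset

private lemma edges_mapLe_aux {V : Type*} {G G' : SimpleGraph V} (h : G ≤ G') {u v : V}
    (p : G.Walk u v) : (p.mapLe h).edges = p.edges := by
  induction p <;> simp [*]

/-- Along any walk in `T` ending at `u`, each vertex can reach `u` or `v` after
deleting the edge `s(u,v)`. -/
private lemma reach_del_aux' {V : Type*} {T : SimpleGraph V} {u v : V} :
    ∀ {w z : V}, T.Walk w z →
      (T.deleteEdges {s(u, v)}).Reachable w z ∨ (T.deleteEdges {s(u, v)}).Reachable w u ∨
        (T.deleteEdges {s(u, v)}).Reachable w v := by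
  intro w z q
  induction q with
  | nil => exact Or.inl (Reachable.refl _)
  | @cons a b c hab q ih =>
    by_cases hcase : s(a, b) = s(u, v)
    · rw [Sym2.eq_iff] at hcase
      rcases hcase with ⟨rfl, rfl⟩ | ⟨rfl, rfl⟩
      · exact Or.inr (Or.inl (Reachable.refl _))
      · exact Or.inr (Or.inr (Reachable.refl _))
    · have hD : (T.deleteEdges {s(u, v)}).Adj a b := by
        rw [SimpleGraph.deleteEdges_adj]
        exact ⟨hab, by simpa using hcase⟩
      rcases ih with h | h | h
      · exact Or.inl (hD.reachable.trans h)
      · exact Or.inr (Or.inl (hD.reachable.trans h))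
      · exact Or.inr (Or.inr (hD.reachable.trans h))

private lemma reach_del_aux {V : Type*} {T : SimpleGraph V} {u v : V} {w : V}
    (q : T.Walk w u) :
    (T.deleteEdges {s(u, v)}).Reachable w u ∨ (T.deleteEdges {s(u, v)}).Reachable w v := by
  rcases reach_del_aux' (u := u) (v := v) q with h | h | h
  · exact Or.inl h
  · exact Or.inl h
  · exact Or.inr h

/-- Any walk from outside a set `S` into `S` contains an edge crossing into `S`. -/
private lemma cross_aux {V : Type*} {H : SimpleGraph V} (S : Set V) :
    ∀ {a b : V} (w : H.Walk a b), a ∉ S → b ∈ S →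
      ∃ x y, x ∉ S ∧ y ∈ S ∧ s(x, y) ∈ w.edges := by
  intro a b w
  induction w with
  | nil => exact fun ha hb => absurd hb ha
  | @cons a a' b hadj w ih =>
    intro ha hb
    by_cases h' : a' ∈ S
    · exact ⟨a, a', ha, h', by simp⟩
    · obtain ⟨x, y, hx, hy, hmem⟩ := ih h' hb
      exact ⟨x, y, hx, hy, by simp [hmem]⟩

/-- Exchange argument: with all cycles monochromatic, the sum of signs over the
edges of a spanning tree does not depend on the tree. -/
private lemma sum_tree_edges_aux {V : Type*} [Fintype V] [DecidableEq V]
    (G : SimpleGraph V) (σ : Sym2 V → ℤ)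
    (hmono : ∀ (v : V) (w : G.Walk v v), w.IsCycle →
      ∀ e ∈ w.edges, ∀ e' ∈ w.edges, σ e = σ e') :
    ∀ (n : ℕ) (T₁ T₂ : SimpleGraph V) [Fintype T₁.edgeSet] [Fintype T₂.edgeSet],
      T₁ ≤ G → T₂ ≤ G → T₁.IsTree → T₂.IsTree →
      (T₁.edgeFinset \ T₂.edgeFinset).card = n →
      ∑ e ∈ T₁.edgeFinset, σ e = ∑ e ∈ T₂.edgeFinset, σ e := by
  intro n
  induction n with
  | zero =>
    intro T₁ T₂ _ _ h1le h2le ht1 ht2 hcard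
    have hsub : T₁.edgeFinset ⊆ T₂.edgeFinset := by
      rwa [Finset.card_eq_zero, Finset.sdiff_eq_empty_iff_subset] at hcard
    have hc1 := ht1.card_edgeFinset
    have hc2 := ht2.card_edgeFinset
    have : T₁.edgeFinset = T₂.edgeFinset :=
      Finset.eq_of_subset_of_card_le hsub (by omega)
    rw [this]
  | succ n ih =>
    intro T₁ T₂ _ _ h1le h2le ht1 ht2 hcard
    obtain ⟨e, he⟩ : (T₁.edgeFinset \ T₂.edgeFinset).Nonempty :=
      Finset.card_pos.mp (by omega)
    revert he
    induction e using Sym2.ind with | _ u v => ?_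
    intro he
    rw [Finset.mem_sdiff, SimpleGraph.mem_edgeFinset, SimpleGraph.mem_edgeFinset,
      SimpleGraph.mem_edgeSet, SimpleGraph.mem_edgeSet] at he
    obtain ⟨h1adj, h2nadj⟩ := he
    -- fundamental cycle of s(u,v) with respect to T₂
    obtain ⟨q₀⟩ := ht2.isConnected.preconnected v u
    set p : T₂.Walk v u := (q₀.toPath : T₂.Walk v u) with hp_def
    have hpath : p.IsPath := q₀.toPath.isPath
    set pG : G.Walk v u := p.mapLe h2le with hpG_def
    have hpGpath : pG.IsPath := hpath.mapLe h2le
    have hpG_edges : pG.edges = p.edges := edges_mapLe_aux h2le p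
    have hnotmem : s(u, v) ∉ pG.edges := by
      rw [hpG_edges]
      intro hmem
      exact h2nadj (SimpleGraph.Walk.adj_of_mem_edges p hmem)
    have hGadj : G.Adj u v := h1le h1adj
    have hcyc : (Walk.cons hGadj pG).IsCycle :=
      SimpleGraph.Path.cons_isCycle ⟨pG, hpGpath⟩ hGadj hnotmem
    have hsign : ∀ f ∈ p.edges, σ f = σ s(u, v) := by
      intro f hf
      refine hmono u (Walk.cons hGadj pG) hcyc f ?_ s(u, v) ?_
      · rw [Walk.edges_cons]; exact List.mem_cons_of_mem _ (hpG_edges ▸ hf)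
      · rw [Walk.edges_cons]; exact List.mem_cons_self
    -- the cut of T₁ determined by deleting s(u,v)
    set D : SimpleGraph V := T₁.deleteEdges {s(u, v)} with hD_def
    have hDle : D ≤ T₁ := SimpleGraph.deleteEdges_le _
    have hvS : ¬ D.Reachable u v := by
      intro hr
      obtain ⟨r₀⟩ := hr.symm
      have hrpath : (r₀.toPath : D.Walk v u).IsPath := r₀.toPath.isPath
      set rT : T₁.Walk v u := (r₀.toPath : D.Walk v u).mapLe hDle with hrT_def
      have hrTpath : rT.IsPath := hrpath.mapLe hDle
      have hrT_edges : rT.edges = (r₀.toPath : D.Walk v u).edges := edges_mapLe_aux hDle _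
      have hnm : s(u, v) ∉ rT.edges := by
        rw [hrT_edges]
        intro hmem
        have := SimpleGraph.Walk.edges_subset_edgeSet _ hmem
        rw [hD_def, SimpleGraph.edgeSet_deleteEdges] at this
        exact this.2 rfl
      exact ht1.IsAcyclic (Walk.cons h1adj rT)
        (SimpleGraph.Path.cons_isCycle ⟨rT, hrTpath⟩ h1adj hnm)
    have reachAny : ∀ w : V, D.Reachable w u ∨ D.Reachable w v := by
      intro w
      obtain ⟨q⟩ := ht1.isConnected.preconnected w u
      exact reach_del_aux q
    -- find the crossing edge on p
    obtain ⟨x, y, hx, hy, hfp⟩ :=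
      cross_aux {w | D.Reachable u w} p (fun h => hvS h) (Reachable.refl u)
    have hx : ¬ D.Reachable u x := hx
    have hy : D.Reachable u y := hy
    have hxyT2 : T₂.Adj x y := SimpleGraph.Walk.adj_of_mem_edges p hfp
    have hxy_ne : x ≠ y := hxyT2.ne
    have hfne : s(x, y) ≠ s(u, v) := by
      intro h
      rw [Sym2.eq_iff] at h
      rcases h with ⟨rfl, rfl⟩ | ⟨rfl, rfl⟩
      · exact h2nadj hxyT2
      · exact h2nadj hxyT2.symm
    have hfT1 : s(x, y) ∉ T₁.edgeSet := by
      intro hmem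
      have hDxy : D.Adj x y := by
        rw [hD_def, SimpleGraph.deleteEdges_adj]
        exact ⟨hmem, by simpa using hfne⟩
      exact hx (hy.trans hDxy.symm.reachable)
    have hsignf : σ s(x, y) = σ s(u, v) := hsign _ hfp
    -- the new tree
    set T₁' : SimpleGraph V := D ⊔ SimpleGraph.edge x y with hT1'_def
    have hxyT1' : T₁'.Adj x y := by
      rw [hT1'_def, SimpleGraph.sup_adj, SimpleGraph.edge_adj]
      exact Or.inr ⟨Or.inl ⟨rfl, rfl⟩, hxy_ne⟩
    have h1'le : T₁' ≤ G := by
      refine sup_le (le_trans hDle h1le) ?_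
      intro a b hab
      rw [SimpleGraph.edge_adj] at hab
      rcases hab.1 with ⟨rfl, rfl⟩ | ⟨rfl, rfl⟩
      · exact h2le hxyT2
      · exact h2le hxyT2.symm
    have hxv : D.Reachable x v := by
      rcases reachAny x with h | h
      · exact absurd h.symm hx
      · exact h
    have key : ∀ w : V, T₁'.Reachable w u := by
      intro w
      rcases reachAny w with h | h
      · exact h.mono le_sup_left
      · exact (h.mono le_sup_left).trans
          (((hxv.symm.mono le_sup_left).trans hxyT1'.reachable).trans
            (hy.symm.mono le_sup_left))
    have hconn : T₁'.Connected := by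
      rw [SimpleGraph.connected_iff]
      exact ⟨fun a b => (key a).trans (key b).symm, ht1.isConnected.nonempty⟩
    have hfT1' : s(x, y) ∉ D.edgeSet := fun h =>
      hfT1 (SimpleGraph.edgeSet_mono hDle h)
    have hdel : T₁' \ SimpleGraph.fromEdgeSet {s(x, y)} = D := by
      ext a b
      simp only [SimpleGraph.sdiff_adj, SimpleGraph.sup_adj, SimpleGraph.fromEdgeSet_adj,
        Set.mem_singleton_iff, SimpleGraph.edge_adj, hT1'_def]
      constructor
      · rintro ⟨hl | hr, hns⟩
        · exact hl
        · exact absurd ⟨by rcases hr.1 with ⟨rfl, rfl⟩ | ⟨rfl, rfl⟩ <;>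
            simp [Sym2.eq_swap], hr.2⟩ hns
      · intro hD
        refine ⟨Or.inl hD, fun hc => ?_⟩
        exact hfT1' (hc.1 ▸ (D.mem_edgeSet.mpr hD))
    have hbridge : T₁'.IsBridge s(x, y) := by
      rw [SimpleGraph.isBridge_iff]
      show ¬ (T₁' \ SimpleGraph.fromEdgeSet {s(x, y)}).Reachable x y
      rw [hdel]
      intro hr
      exact hx (hy.trans hr.symm)
    have hacyc : T₁'.IsAcyclic := by
      intro w c' hc'
      have hfnot : s(x, y) ∉ c'.edges :=
        (SimpleGraph.isBridge_iff_adj_and_forall_cycle_notMem (T₁'.mem_edgeSet.mpr hxyT1')).mp hbridge c' hc'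
      have hsub : ∀ e' ∈ c'.edges, e' ∈ T₁.edgeSet := by
        intro e' hec
        have hmem := SimpleGraph.Walk.edges_subset_edgeSet c' hec
        rw [hT1'_def, SimpleGraph.edgeSet_sup] at hmem
        rcases hmem with hmem | hmem
        · rw [hD_def, SimpleGraph.edgeSet_deleteEdges] at hmem
          exact hmem.1
        · rw [SimpleGraph.edge_edgeSet_of_ne hxy_ne] at hmem
          exact absurd (hmem ▸ hec) hfnot
      exact ht1.IsAcyclic (c'.transfer T₁ hsub) (hc'.transfer hsub)
    have ht1' : T₁'.IsTree := ⟨hconn, hacyc⟩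
    haveI : Fintype T₁'.edgeSet := Fintype.ofFinite _
    have hEF : T₁'.edgeFinset = insert s(x, y) (T₁.edgeFinset.erase s(u, v)) := by
      ext e'
      simp only [SimpleGraph.mem_edgeFinset, Finset.mem_insert, Finset.mem_erase,
        SimpleGraph.mem_edgeFinset, hT1'_def, SimpleGraph.edgeSet_sup, hD_def,
        SimpleGraph.edgeSet_deleteEdges, SimpleGraph.edge_edgeSet_of_ne hxy_ne,
        Set.mem_union, Set.mem_diff, Set.mem_singleton_iff]
      tauto
    have hfnotT1F : s(x, y) ∉ T₁.edgeFinset.erase s(u, v) := by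
      simp [SimpleGraph.mem_edgeFinset, hfT1]
    have heT1F : s(u, v) ∈ T₁.edgeFinset := by
      rw [SimpleGraph.mem_edgeFinset]; exact h1adj
    have hsum : ∑ e' ∈ T₁'.edgeFinset, σ e' = ∑ e' ∈ T₁.edgeFinset, σ e' := by
      rw [hEF, Finset.sum_insert hfnotT1F, hsignf]
      rw [← Finset.sum_erase_add _ _ heT1F, add_comm]
    have hcard' : (T₁'.edgeFinset \ T₂.edgeFinset).card = n := by
      have hset : T₁'.edgeFinset \ T₂.edgeFinset
          = (T₁.edgeFinset \ T₂.edgeFinset).erase s(u, v) := by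
        ext e'
        simp only [hEF, Finset.mem_sdiff, Finset.mem_insert, Finset.mem_erase,
          SimpleGraph.mem_edgeFinset]
        constructor
        · rintro ⟨hl | ⟨hne, hmem⟩, hnt2⟩
          · exact absurd (T₂.mem_edgeSet.mpr hxyT2) (by rwa [hl] at hnt2)
          · exact ⟨hne, hmem, hnt2⟩
        · rintro ⟨hne, hmem, hnt2⟩
          exact ⟨Or.inr ⟨hne, hmem⟩, hnt2⟩
      have hmem : s(u, v) ∈ T₁.edgeFinset \ T₂.edgeFinset := by
        rw [Finset.mem_sdiff, SimpleGraph.mem_edgeFinset, SimpleGraph.mem_edgeFinset]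
        exact ⟨h1adj, fun h => h2nadj (T₂.mem_edgeSet.mp h)⟩
      rw [hset, Finset.card_erase_of_mem hmem, hcard]
      omega
    rw [← hsum]
    exact ih T₁' T₂ h1'le h2le ht1' ht2 hcard'

/-- Graph-theoretic core of Proposition 1 (nullification writhe):
if every cycle of a connected simple graph `G` is monochromatic with
respect to a `±1` sign assignment `σ` on its edges, then the sum of the
signs of the edges outside a spanning tree is independent of the choice
of spanning tree. -/
theorem nullification_writhe_well_defined
    {V : Type*} [Fintype V] [DecidableEq V]
    (G : SimpleGraph V) [DecidableRel G.Adj]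
    (hG : G.Connected)
    (σ : Sym2 V → ℤ)
    (hσ : ∀ e ∈ G.edgeSet, σ e = 1 ∨ σ e = -1)
    (hmono : ∀ (v : V) (w : G.Walk v v), w.IsCycle →
      ∀ e ∈ w.edges, ∀ e' ∈ w.edges, σ e = σ e')
    (T₁ T₂ : SimpleGraph V) [DecidableRel T₁.Adj] [DecidableRel T₂.Adj]
    (hT₁le : T₁ ≤ G) (hT₂le : T₂ ≤ G)
    (hT₁ : T₁.IsTree) (hT₂ : T₂.IsTree) :
    ∑ e ∈ G.edgeFinset \ T₁.edgeFinset, σ e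
      = ∑ e ∈ G.edgeFinset \ T₂.edgeFinset, σ e := by
  have hs1 : T₁.edgeFinset ⊆ G.edgeFinset := by
    rw [SimpleGraph.edgeFinset_subset_edgeFinset]; exact hT₁le
  have hs2 : T₂.edgeFinset ⊆ G.edgeFinset := by
    rw [SimpleGraph.edgeFinset_subset_edgeFinset]; exact hT₂le
  rw [Finset.sum_sdiff_eq_sub hs1, Finset.sum_sdiff_eq_sub hs2,
    sum_tree_edges_aux G σ hmono (T₁.edgeFinset \ T₂.edgeFinset).card T₁ T₂
      hT₁le hT₂le hT₁ hT₂ rfl]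
end

section
/- Let V be a finite type, let G be a connected simple graph on V, and let σ be a sign assignment giving each edge of G a value +1 or −1. Assume that every cycle of G is monochromatic, i.e., for every walk in G that is a cycle, all edges traversed by the cycle have the same sign. Then for any two spanning trees T₁ and T₂ of G, the sum of the signs of the edges of T₁ equals the sum of the signs of the edges of T₂. (This is the graph-theoretic core of Proposition 1 for the remaining writhe: the remaining writhe of a reduced alternating link projection is independent of the choice of the nullification set, since the crossings remaining after nullification correspond to the edges of a spanning tree of the Seifert graph.) -/
open SimpleGraph Finset

/-- If every edge of `H` has reachable endpoints in `H'`, then preconnectedness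
transfers from `H` to `H'`. -/
lemma preconnected_of_adj_reachable {V : Type*} {H H' : SimpleGraph V}
    (hH : H.Preconnected) (h : ∀ u v, H.Adj u v → H'.Reachable u v) :
    H'.Preconnected := by
  intro u v
  obtain ⟨w⟩ := hH u v
  induction w with
  | nil => exact Reachable.refl _
  | cons a p ih => exact (h _ _ a).trans ih

/-- The key exchange lemma, phrased for edge finsets of spanning trees. -/
lemma remaining_writhe_key {V : Type*} [Fintype V] [DecidableEq V]
    (G : SimpleGraph V)
    (σ : Sym2 V → ℤ)
    (hmono : ∀ (v : V) (w : G.Walk v v), w.IsCycle →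
      ∀ e ∈ w.edges, ∀ e' ∈ w.edges, σ e = σ e')
    (T₂ : SimpleGraph V) [DecidableRel T₂.Adj]
    (hT₂le : T₂ ≤ G) (hT₂ : T₂.IsTree) :
    ∀ (n : ℕ) (F : Finset (Sym2 V)),
      (SimpleGraph.fromEdgeSet (↑F : Set (Sym2 V))).edgeSet = ↑F →
      SimpleGraph.fromEdgeSet (↑F : Set (Sym2 V)) ≤ G →
      (SimpleGraph.fromEdgeSet (↑F : Set (Sym2 V))).IsTree →
      (F \ T₂.edgeFinset).card = n →
      ∑ e ∈ F, σ e = ∑ e ∈ T₂.edgeFinset, σ e := by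
  classical
  intro n
  induction n with
  | zero =>
    intro F hE hle hT hcard
    -- `F ⊆ T₂.edgeFinset` and the cards agree, so they are equal.
    have hsub : F ⊆ T₂.edgeFinset := by
      rwa [← Finset.sdiff_eq_empty_iff_subset, ← Finset.card_eq_zero]
    have hEF : (SimpleGraph.fromEdgeSet (↑F : Set (Sym2 V))).edgeFinset = F := by
      ext g
      rw [mem_edgeFinset, hE]
      simp
    have h1 : F.card + 1 = Fintype.card V := by
      have := hT.card_edgeFinset
      rwa [hEF] at this
    have h2 : T₂.edgeFinset.card + 1 = Fintype.card V := hT₂.card_edgeFinset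
    have : F = T₂.edgeFinset :=
      Finset.eq_of_subset_of_card_le hsub (by omega)
    rw [this]
  | succ n ih =>
    intro F hE hle hT hcard
    set T := SimpleGraph.fromEdgeSet (↑F : Set (Sym2 V)) with hTdef
    have hEF : T.edgeFinset = F := by
      ext g
      rw [mem_edgeFinset, hE]
      simp
    have h1 : F.card + 1 = Fintype.card V := by
      have := hT.card_edgeFinset
      rwa [hEF] at this
    have h2 : T₂.edgeFinset.card + 1 = Fintype.card V := hT₂.card_edgeFinset
    -- pick an edge `e` of `T₂` not in `F`
    have hne : (T₂.edgeFinset \ F).Nonempty := by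
      rw [← Finset.card_pos, ← Finset.card_sdiff_comm (by omega), hcard]
      omega
    obtain ⟨e, he⟩ := hne
    induction e using Sym2.ind with
    | _ x y =>
    rw [Finset.mem_sdiff, mem_edgeFinset, mem_edgeSet] at he
    obtain ⟨hxy2, hxyF⟩ := he
    have hxyG : G.Adj x y := hT₂le hxy2
    have hxyne : x ≠ y := hxy2.ne
    -- the unique path in the tree `T` between `x` and `y`
    obtain ⟨p, hp, hpuniq⟩ := hT.existsUnique_path x y
    have hpedges : ∀ g ∈ p.edges, g ∈ T.edgeSet := fun g hg => p.edges_subset_edgeSet hg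
    -- transfer to a path in `G` and close up with `e` into a cycle of `G`
    have hpG : ∀ g ∈ p.edges, g ∈ G.edgeSet := fun g hg =>
      (SimpleGraph.edgeSet_mono hle) (hpedges g hg)
    set p' : G.Walk x y := p.transfer G hpG with hp'def
    have hp'path : p'.IsPath := hp.transfer hpG
    have hp'edges : p'.edges = p.edges := p.edges_transfer hpG
    have hcyc : (SimpleGraph.Walk.cons hxyG.symm p').IsCycle := by
      refine SimpleGraph.Path.cons_isCycle ⟨p', hp'path⟩ hxyG.symm ?_
      rw [hp'edges]
      intro hmem
      have : s(y, x) ∈ T.edgeSet := hpedges _ hmem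
      rw [hE] at this
      rw [Sym2.eq_swap] at this
      exact hxyF this
    set c : G.Walk y y := SimpleGraph.Walk.cons hxyG.symm p' with hcdef
    have hcedges : c.edges = s(y, x) :: p'.edges := rfl
    -- find an edge `f` of the path not in `T₂`
    have hexf : ∃ f ∈ p'.edges, f ∉ T₂.edgeSet := by
      by_contra hall
      push_neg at hall
      have hcall : ∀ g ∈ c.edges, g ∈ T₂.edgeSet := by
        intro g hg
        rw [hcedges, List.mem_cons] at hg
        rcases hg with rfl | hg
        · rw [SimpleGraph.mem_edgeSet]
          exact hxy2.symm
        · exact hall g hg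
      exact hT₂.IsAcyclic (c.transfer T₂ hcall) (hcyc.transfer hcall)
    obtain ⟨f, hfp, hfT₂⟩ := hexf
    have hfF : f ∈ F := by
      have : f ∈ T.edgeSet := hpedges f (hp'edges ▸ hfp)
      rwa [hE] at this
    have hfc : f ∈ c.edges := by rw [hcedges]; exact List.mem_cons_of_mem _ hfp
    have hec : s(y, x) ∈ c.edges := by rw [hcedges]; exact List.mem_cons_self
    have hσfe : σ f = σ s(x, y) := by
      have := hmono y c hcyc f hfc s(y, x) hec
      rwa [Sym2.eq_swap] at this
    have hfe : f ≠ s(x, y) := by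
      rintro rfl; exact hxyF hfF
    -- the new edge set
    set F' : Finset (Sym2 V) := insert s(x, y) (F.erase f) with hF'def
    have hnotdiagF : ∀ g ∈ F, ¬ g.IsDiag := by
      intro g hg
      have : g ∈ T.edgeSet := by rwa [hE]
      exact T.not_isDiag_of_mem_edgeSet this
    have hE' : (SimpleGraph.fromEdgeSet (↑F' : Set (Sym2 V))).edgeSet = ↑F' := by
      rw [SimpleGraph.edgeSet_fromEdgeSet]
      ext g
      simp only [hF'def, Set.mem_diff, Set.mem_setOf_eq, Finset.coe_insert, Set.mem_insert_iff,
        Finset.coe_erase, Set.mem_diff, Set.mem_singleton_iff, Finset.mem_coe,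
        and_iff_left_iff_imp]
      rintro (rfl | ⟨hg, _⟩)
      · exact Sym2.mk_isDiag_iff.not.mpr hxyne
      · exact hnotdiagF g hg
    have hleF' : (↑F' : Set (Sym2 V)) ⊆ G.edgeSet := by
      intro g hg
      simp only [hF'def, Finset.coe_insert, Set.mem_insert_iff, Finset.coe_erase, Set.mem_diff,
        Finset.mem_coe, Set.mem_singleton_iff] at hg
      rcases hg with rfl | ⟨hg, _⟩
      · exact hxyG
      · exact (SimpleGraph.edgeSet_mono hle) (by rwa [hE])
    have hle' : SimpleGraph.fromEdgeSet (↑F' : Set (Sym2 V)) ≤ G := by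
      calc SimpleGraph.fromEdgeSet (↑F' : Set (Sym2 V)) ≤ SimpleGraph.fromEdgeSet G.edgeSet :=
            SimpleGraph.fromEdgeSet_mono hleF'
        _ = G := SimpleGraph.fromEdgeSet_edgeSet G
    set T' := SimpleGraph.fromEdgeSet (↑F' : Set (Sym2 V)) with hT'def
    -- membership descriptions
    have hT'adj : ∀ a b : V, T'.Adj a b ↔ (s(a, b) ∈ F' ∧ a ≠ b) := by
      intro a b
      rw [hT'def, SimpleGraph.fromEdgeSet_adj]
      simp
    have hTadj : ∀ a b : V, T.Adj a b ↔ (s(a, b) ∈ F ∧ a ≠ b) := by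
      intro a b
      rw [hTdef, SimpleGraph.fromEdgeSet_adj]
      simp
    -- the auxiliary graph `T''` = `T` plus the new edge
    set T'' := T ⊔ SimpleGraph.fromEdgeSet {s(x, y)} with hT''def
    have hcT'' : ∀ g ∈ c.edges, g ∈ T''.edgeSet := by
      intro g hg
      rw [hcedges, List.mem_cons] at hg
      rw [hT''def, SimpleGraph.edgeSet_sup]
      rcases hg with rfl | hg
      · right
        rw [SimpleGraph.edgeSet_fromEdgeSet]
        refine ⟨by rw [Sym2.eq_swap]; exact rfl, ?_⟩
        simpa using hxyne.symm
      · left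
        exact hpedges g (hp'edges ▸ hg)
    have hc'' := hcyc.transfer hcT''
    -- `T''` minus `f` is a subgraph of `T'`
    have hT''subT' : T'' \ SimpleGraph.fromEdgeSet {f} ≤ T' := by
      intro a b hab
      rw [SimpleGraph.sdiff_adj] at hab
      obtain ⟨hab1, hab2⟩ := hab
      have habne : a ≠ b := hab1.ne
      have habf : s(a, b) ≠ f := by
        intro hh
        exact hab2 (by rw [SimpleGraph.fromEdgeSet_adj]; exact ⟨by rw [hh]; rfl, habne⟩)
      rw [hT''def, SimpleGraph.sup_adj] at hab1
      rw [hT'adj]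
      refine ⟨?_, habne⟩
      rcases hab1 with h | h
      · rw [hTadj] at h
        exact Finset.mem_insert_of_mem (Finset.mem_erase.mpr ⟨habf, h.1⟩)
      · rw [SimpleGraph.fromEdgeSet_adj] at h
        exact Finset.mem_insert.mpr (Or.inl h.1)
    -- `T'` is connected
    have hT'conn : T'.Connected := by
      have hpre : T'.Preconnected := by
        refine preconnected_of_adj_reachable hT.isConnected.preconnected ?_
        intro u v huv
        by_cases huvf : s(u, v) = f
        · -- use the cycle through `f`
          have hreach : (T'' \ SimpleGraph.fromEdgeSet {s(u, v)}).Reachable u v := by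
            have := (SimpleGraph.adj_and_reachable_delete_edges_iff_exists_cycle
              (G := T'') (v := u) (w := v)).mpr
              ⟨y, c.transfer T'' hcT'', hc'', by
                rw [SimpleGraph.Walk.edges_transfer, huvf]; exact hfc⟩
            exact this.2
          rw [huvf] at hreach
          exact hreach.mono hT''subT'
        · refine SimpleGraph.Adj.reachable ?_
          rw [hT'adj]
          have : s(u, v) ∈ F := by
            have : s(u, v) ∈ T.edgeSet := huv
            rwa [hE] at this
          exact ⟨Finset.mem_insert_of_mem (Finset.mem_erase.mpr ⟨huvf, this⟩), huv.ne⟩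
      have : Nonempty V := hT.isConnected.nonempty
      exact ⟨hpre⟩
    -- `T'` is acyclic
    have hT'acyc : T'.IsAcyclic := by
      intro v c' hc'
      have hc'edges : ∀ g ∈ c'.edges, g ∈ (↑F' : Set (Sym2 V)) := by
        intro g hg
        have := c'.edges_subset_edgeSet hg
        rwa [hE'] at this
      by_cases hecmem : s(x, y) ∈ c'.edges
      · -- extract from the cycle a path in `T'` minus `e`, transfer to `T`,
        -- contradict uniqueness of `p` (which uses `f`)
        have hreach : (T' \ SimpleGraph.fromEdgeSet {s(x, y)}).Reachable x y := by
          have := (SimpleGraph.adj_and_reachable_delete_edges_iff_exists_cycle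
            (G := T') (v := x) (w := y)).mpr ⟨v, c', hc', hecmem⟩
          exact this.2
        obtain ⟨q⟩ := hreach
        have hqT : ∀ g ∈ q.edges, g ∈ T.edgeSet := by
          intro g hg
          have hg' := q.edges_subset_edgeSet hg
          rw [SimpleGraph.edgeSet_sdiff, hE', SimpleGraph.edgeSet_fromEdgeSet] at hg'
          obtain ⟨hg1, hg2⟩ := hg'
          have hgne : g ≠ s(x, y) := by
            intro hh
            exact hg2 ⟨hh ▸ rfl, by simp [hh, Sym2.mk_isDiag_iff, hxyne]⟩
          rw [hE]
          have : g ∈ F' := hg1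
          rw [hF'def, Finset.mem_insert] at this
          rcases this with hh | hh
          · exact absurd hh hgne
          · exact Finset.mem_of_mem_erase hh
        have hqnotf : ∀ g ∈ q.edges, g ≠ f := by
          intro g hg
          have hg' := q.edges_subset_edgeSet hg
          rw [SimpleGraph.edgeSet_sdiff, hE', SimpleGraph.edgeSet_fromEdgeSet] at hg'
          obtain ⟨hg1, hg2⟩ := hg'
          have hgne : g ≠ s(x, y) := by
            intro hh
            exact hg2 ⟨hh ▸ rfl, by simp [hh, Sym2.mk_isDiag_iff, hxyne]⟩
          have : g ∈ F' := hg1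
          rw [hF'def, Finset.mem_insert] at this
          rcases this with hh | hh
          · exact absurd hh hgne
          · exact fun hfeq => (Finset.mem_erase.mp hh).1 hfeq
        set qT := q.transfer T hqT with hqTdef
        have hqTpath : (qT.toPath : T.Walk x y).IsPath := (qT.toPath).2
        have := hpuniq (qT.toPath : T.Walk x y) hqTpath
        have hfin : f ∈ (qT.toPath : T.Walk x y).edges := by
          rw [this]
          exact hp'edges ▸ hfp
        have hfin2 : f ∈ qT.edges := SimpleGraph.Walk.edges_toPath_subset qT hfin
        rw [hqTdef, SimpleGraph.Walk.edges_transfer] at hfin2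
        exact hqnotf f hfin2 rfl
      · -- cycle avoiding `e` lives in `T`
        have hcT : ∀ g ∈ c'.edges, g ∈ T.edgeSet := by
          intro g hg
          have hg' : g ∈ F' := hc'edges g hg
          rw [hF'def, Finset.mem_insert] at hg'
          rcases hg' with rfl | hg'
          · exact absurd hg hecmem
          · rw [hE]; exact Finset.mem_of_mem_erase hg'
        exact hT.IsAcyclic (c'.transfer T hcT) (hc'.transfer hcT)
    have hT'tree : T'.IsTree := ⟨hT'conn, hT'acyc⟩
    -- cardinality of the new difference
    have hfF₂ : f ∉ T₂.edgeFinset := by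
      rw [mem_edgeFinset]; exact hfT₂
    have hcard' : (F' \ T₂.edgeFinset).card = n := by
      have hset : F' \ T₂.edgeFinset = (F \ T₂.edgeFinset).erase f := by
        ext g
        simp only [hF'def, Finset.mem_sdiff, Finset.mem_insert, Finset.mem_erase]
        constructor
        · rintro ⟨rfl | ⟨hg1, hg2⟩, hg3⟩
          · exact absurd (mem_edgeFinset.mpr (T₂.mem_edgeSet.mpr hxy2)) hg3
          · exact ⟨hg1, hg2, hg3⟩
        · rintro ⟨hg1, hg2, hg3⟩
          exact ⟨Or.inr ⟨hg1, hg2⟩, hg3⟩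
      rw [hset, Finset.card_erase_of_mem (Finset.mem_sdiff.mpr ⟨hfF, hfF₂⟩), hcard]
      omega
    -- sums agree
    have hsum : ∑ g ∈ F', σ g = ∑ g ∈ F, σ g := by
      rw [hF'def,
        Finset.sum_insert (fun h => hxyF (Finset.mem_of_mem_erase h)),
        ← Finset.add_sum_erase F σ hfF, hσfe]
    rw [← hsum]
    exact ih F' hE' hle' hT'tree hcard'

/-- Graph-theoretic core of Proposition 1 (remaining writhe):
if every cycle of a connected simple graph `G` is monochromatic with
respect to a `±1` sign assignment `σ` on its edges, then the sum of the
signs of the edges of a spanning tree is independent of the choice of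
spanning tree. -/
theorem remaining_writhe_well_defined
    {V : Type*} [Fintype V] [DecidableEq V]
    (G : SimpleGraph V) [DecidableRel G.Adj]
    (hG : G.Connected)
    (σ : Sym2 V → ℤ)
    (hσ : ∀ e ∈ G.edgeSet, σ e = 1 ∨ σ e = -1)
    (hmono : ∀ (v : V) (w : G.Walk v v), w.IsCycle →
      ∀ e ∈ w.edges, ∀ e' ∈ w.edges, σ e = σ e')
    (T₁ T₂ : SimpleGraph V) [DecidableRel T₁.Adj] [DecidableRel T₂.Adj]
    (hT₁le : T₁ ≤ G) (hT₂le : T₂ ≤ G)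
    (hT₁ : T₁.IsTree) (hT₂ : T₂.IsTree) :
    ∑ e ∈ T₁.edgeFinset, σ e = ∑ e ∈ T₂.edgeFinset, σ e := by
  have hcoe : (↑T₁.edgeFinset : Set (Sym2 V)) = T₁.edgeSet := T₁.coe_edgeFinset
  have hfe : SimpleGraph.fromEdgeSet (↑T₁.edgeFinset : Set (Sym2 V)) = T₁ := by
    rw [hcoe, SimpleGraph.fromEdgeSet_edgeSet]
  exact remaining_writhe_key G σ hmono T₂ hT₂le hT₂ _ T₁.edgeFinset
    (by rw [hfe, hcoe]) (by rw [hfe]; exact hT₁le) (by rw [hfe]; exact hT₁) rfl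
end
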